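/- arXiv:1507.00070 — 6 statements merged into one kernel-verified Lean document; each statement's English description precedes it below -/
import Mathlib

section
/- Let r ∈ ℕ^m and c ∈ ℕ^n with Σ_i r_i = Σ_j c_j, and let X = (X_{ij}) be an m×n array of independent geometric random variables where X_{ij} has P(X_{ij} = k) = (1 − α_i β_j)(α_i β_j)^k, with 0 < α_i β_j < 1 for all i,j. Then for every (r,c)-contingency table ξ, P(X = ξ) = (∏_i α_i^{r_i}) (∏_j β_j^{c_j}) ∏_{i,j} (1 − α_i β_j). In particular, P(X = ξ) is the same for all (r,c)-contingency tables ξ, so the law of X conditioned on the event that X is an (r,c)-contingency table is the uniform distribution on the set of (r,c)-contingency tables. -/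
open MeasureTheory ProbabilityTheory ENNReal

/-- The set of `(r,c)`-contingency tables: `m × n` matrices of nonnegative integers with
row sums `r` and column sums `c`. -/
def contingencyTables (m n : ℕ) (r : Fin m → ℕ) (c : Fin n → ℕ) :
    Set (Fin m → Fin n → ℕ) :=
  {ξ | (∀ i, ∑ j, ξ i j = r i) ∧ (∀ j, ∑ i, ξ i j = c j)}

/-- for an array of independent geometric random variables with parameters
`1 - α i * β j`, the probability of any fixed `(r,c)`-contingency table `ξ` is
`(∏ i, α i ^ r i) * (∏ j, β j ^ c j) * ∏ i j, (1 - α i * β j)`; in particular, the law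
conditioned on the set of `(r,c)`-contingency tables is uniform on that set. -/
theorem stmt_1 (m n : ℕ) (r : Fin m → ℕ) (c : Fin n → ℕ)
    (hrc : ∑ i, r i = ∑ j, c j)
    (α : Fin m → ℝ) (β : Fin n → ℝ)
    (hαβ0 : ∀ i j, 0 < α i * β j) (hαβ1 : ∀ i j, α i * β j < 1)
    (μ : Measure (Fin m → Fin n → ℕ)) [IsProbabilityMeasure μ]
    (hμ : ∀ ξ : Fin m → Fin n → ℕ,
      μ {ξ} = ∏ i, ∏ j, ENNReal.ofReal ((1 - α i * β j) * (α i * β j) ^ (ξ i j))) :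
    (∀ ξ ∈ contingencyTables m n r c,
      μ {ξ} = ENNReal.ofReal
        ((∏ i, α i ^ (r i)) * (∏ j, β j ^ (c j)) * ∏ i, ∏ j, (1 - α i * β j))) ∧
    (∀ ξ ∈ contingencyTables m n r c,
      μ[|contingencyTables m n r c] {ξ}
        = ((contingencyTables m n r c).ncard : ℝ≥0∞)⁻¹) := by
  set s := contingencyTables m n r c with hs
  -- common value
  set p : ℝ≥0∞ := ENNReal.ofReal
      ((∏ i, α i ^ (r i)) * (∏ j, β j ^ (c j)) * ∏ i, ∏ j, (1 - α i * β j)) with hp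
  have hpos : ∀ i j, (0:ℝ) < 1 - α i * β j := fun i j => by linarith [hαβ1 i j]
  have key : ∀ ξ ∈ s, μ {ξ} = p := by
    intro ξ ⟨hr, hc⟩
    rw [hμ ξ]
    have hfac : ∀ i j, (0:ℝ) ≤ (1 - α i * β j) * (α i * β j) ^ (ξ i j) :=
      fun i j => le_of_lt (mul_pos (hpos i j) (pow_pos (hαβ0 i j) _))
    rw [show (∏ i, ∏ j, ENNReal.ofReal ((1 - α i * β j) * (α i * β j) ^ (ξ i j)))
        = ENNReal.ofReal (∏ i, ∏ j, ((1 - α i * β j) * (α i * β j) ^ (ξ i j))) from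
      (Finset.prod_congr rfl fun i _ =>
        (ENNReal.ofReal_prod_of_nonneg fun j _ => hfac i j).symm).trans
      (ENNReal.ofReal_prod_of_nonneg fun i _ =>
        Finset.prod_nonneg fun j _ => hfac i j).symm]
    congr 1
    have e1 : ∏ i, ∏ j, ((1 - α i * β j) * (α i * β j) ^ ξ i j)
        = (∏ i, ∏ j, (1 - α i * β j)) * ∏ i, ∏ j, (α i ^ ξ i j * β j ^ ξ i j) := by
      simp_rw [← Finset.prod_mul_distrib, mul_pow]
    have e2 : ∏ i, ∏ j, (α i ^ ξ i j * β j ^ ξ i j)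
        = (∏ i, α i ^ r i) * ∏ j, β j ^ c j := by
      calc ∏ i, ∏ j, (α i ^ ξ i j * β j ^ ξ i j)
          = (∏ i, ∏ j, α i ^ ξ i j) * ∏ i, ∏ j, β j ^ ξ i j := by
            simp_rw [Finset.prod_mul_distrib]
        _ = (∏ i, α i ^ r i) * ∏ j, β j ^ c j := by
            congr 1
            · exact Finset.prod_congr rfl fun i _ => by
                rw [Finset.prod_pow_eq_pow_sum, hr i]
            · rw [Finset.prod_comm]
              exact Finset.prod_congr rfl fun j _ => by
                rw [Finset.prod_pow_eq_pow_sum, hc j]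
    rw [e1, e2, mul_comm]
  refine ⟨key, ?_⟩
  intro ξ hξ
  -- finiteness of s
  have hsub : s ⊆ Set.pi Set.univ (fun i => Set.pi Set.univ (fun _ : Fin n => Set.Iic (r i))) := by
    intro η ⟨hr, _⟩ i _ j _
    simp only [Set.mem_Iic]
    calc η i j ≤ ∑ j', η i j' := Finset.single_le_sum (fun _ _ => Nat.zero_le _) (Finset.mem_univ j)
    _ = r i := hr i
  have hfin : s.Finite := Set.Finite.subset
    (Set.Finite.pi fun i => Set.Finite.pi fun _ => Set.finite_Iic _) hsub
  have hms : MeasurableSet s := hfin.countable.measurableSet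
  -- μ s = ncard • p
  have hμs : μ s = (s.ncard : ℝ≥0∞) * p := by
    have := sum_measure_preimage_singleton (μ := μ) hfin.toFinset (f := id)
      (fun y _ => measurableSet_eq)
    simp only [Set.preimage_id, Set.Finite.coe_toFinset] at this
    rw [← this, Finset.sum_congr rfl (fun y hy => key y (hfin.mem_toFinset.mp hy)),
      Finset.sum_const, Set.ncard_eq_toFinset_card s hfin, nsmul_eq_mul]
  have hp0 : p ≠ 0 := by
    rw [← key ξ hξ, hμ ξ]
    refine Finset.prod_ne_zero_iff.mpr fun i _ => Finset.prod_ne_zero_iff.mpr fun j _ => ?_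
    exact ne_of_gt (ENNReal.ofReal_pos.mpr (mul_pos (hpos i j) (pow_pos (hαβ0 i j) _)))
  have hpt : p ≠ ⊤ := ENNReal.ofReal_ne_top
  rw [ProbabilityTheory.cond_apply hms, hμs, Set.inter_comm,
    Set.inter_eq_self_of_subset_left (Set.singleton_subset_iff.mpr hξ), key ξ hξ,
    ENNReal.mul_inv (Or.inl (Nat.cast_ne_zero.mpr (((Set.ncard_pos hfin).mpr ⟨ξ, hξ⟩).ne')))
      (Or.inl (ENNReal.natCast_ne_top _))]
  rw [mul_assoc, ENNReal.inv_mul_cancel hp0 hpt, mul_one]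
end

section
/- Let X = (X_{ij}) be an m×n array of independent geometric random variables with P(X_{ij} = k) = (1 − α_i β_j)(α_i β_j)^k where 0 < α_i β_j < 1, let c ∈ ℕ^n, and for j = 1,…,n let C_j = (C_{1j},…,C_{mj}) be independent random vectors where C_j is distributed as (X_{1j},…,X_{mj}) conditioned on Σ_i X_{ij} = c_j (assumed to be an event of positive probability). Then for any r ∈ ℕ^m with Σ_i r_i = Σ_j c_j, the law of C = (C_1,…,C_n) conditioned on the event that Σ_j C_{ij} = r_i for all i is the uniform distribution on the set of (r,c)-contingency tables. -/
open MeasureTheory ProbabilityTheory ENNReal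

lemma contingencyTables_finite (m n : ℕ) (r : Fin m → ℕ) (c : Fin n → ℕ) :
    (contingencyTables m n r c).Finite := by
  have hsub : contingencyTables m n r c ⊆
      Set.pi Set.univ (fun _ : Fin m => Set.pi Set.univ (fun j : Fin n => Set.Iic (c j))) := by
    intro ξ hξ i _ j _
    have : ξ i j ≤ ∑ i', ξ i' j :=
      Finset.single_le_sum (f := fun i' => ξ i' j) (fun _ _ => Nat.zero_le _) (Finset.mem_univ i)
    simpa [hξ.2 j] using this
  exact Set.Finite.subset (Set.Finite.pi fun _ => Set.Finite.pi fun j => Set.finite_Iic _) hsub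

/-- let the columns `C j` be independent, with `C j` distributed as a column of
independent geometric random variables (parameters `1 - α i * β j`) conditioned on having sum
`c j`.  Then the law of the resulting random table, conditioned on the event that all row sums
equal `r`, is uniform on the set of `(r,c)`-contingency tables. -/
theorem stmt_2 (m n : ℕ) (r : Fin m → ℕ) (c : Fin n → ℕ)
    (hrc : ∑ i, r i = ∑ j, c j)
    (α : Fin m → ℝ) (β : Fin n → ℝ)
    (hαβ0 : ∀ i j, 0 < α i * β j) (hαβ1 : ∀ i j, α i * β j < 1)
    -- `μcol j` is the law of the `j`-th column of the array of independent geometrics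
    (μcol : Fin n → Measure (Fin m → ℕ)) (hcolprob : ∀ j, IsProbabilityMeasure (μcol j))
    (hμcol : ∀ j, ∀ v : Fin m → ℕ,
      μcol j {v} = ∏ i, ENNReal.ofReal ((1 - α i * β j) * (α i * β j) ^ (v i)))
    -- the conditioning events have positive probability
    (hpos : ∀ j, 0 < μcol j {v | ∑ i, v i = c j})
    -- `ν` is the joint law of the independent columns `C j`, where `C j` has the law of the
    -- `j`-th column conditioned on its sum being `c j`
    (ν : Measure (Fin m → Fin n → ℕ)) [IsProbabilityMeasure ν]
    (hν : ∀ ξ : Fin m → Fin n → ℕ,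
      ν {ξ} = ∏ j, (μcol j)[|{v | ∑ i, v i = c j}] {fun i => ξ i j}) :
    ∀ ξ ∈ contingencyTables m n r c,
      ν[|{ξ : Fin m → Fin n → ℕ | ∀ i, ∑ j, ξ i j = r i}] {ξ}
        = ((contingencyTables m n r c).ncard : ℝ≥0∞)⁻¹ := by
  intro ξ0 hξ0
  set S := contingencyTables m n r c with hS
  set E : Set (Fin m → Fin n → ℕ) := {ξ | ∀ i, ∑ j, ξ i j = r i} with hE
  -- every set is measurable
  have hmeas : ∀ s : Set (Fin m → Fin n → ℕ), MeasurableSet s := fun s =>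
    s.to_countable.measurableSet
  have hmeas' : ∀ s : Set (Fin m → ℕ), MeasurableSet s := fun s =>
    s.to_countable.measurableSet
  -- the common value of ν on contingency tables
  set Z : Fin n → ℝ≥0∞ := fun j => μcol j {v | ∑ i, v i = c j} with hZ
  have hZne0 : ∀ j, Z j ≠ 0 := fun j => (hpos j).ne'
  have hZnetop : ∀ j, Z j ≠ ∞ := fun j => (measure_lt_top _ _).ne
  -- value of ν at a table with correct column sums
  have hval : ∀ ξ : Fin m → Fin n → ℕ, (∀ j, ∑ i, ξ i j = c j) →
      ν {ξ} = ∏ j, (Z j)⁻¹ * ∏ i, ENNReal.ofReal ((1 - α i * β j) * (α i * β j) ^ ξ i j) := by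
    intro ξ hcols
    rw [hν]
    refine Finset.prod_congr rfl fun j _ => ?_
    rw [cond_apply (hmeas' _) (μcol j)]
    have hmem : (fun i => ξ i j) ∈ {v : Fin m → ℕ | ∑ i, v i = c j} := hcols j
    rw [Set.inter_eq_self_of_subset_right (Set.singleton_subset_iff.mpr hmem), hμcol j]
  -- ν is constant on S
  have hconst : ∀ ξ ∈ S, ν {ξ} = (∏ j, (Z j)⁻¹) *
      ENNReal.ofReal ((∏ j, ∏ i, (1 - α i * β j)) * ((∏ i, α i ^ r i) * ∏ j, β j ^ c j)) := by
    intro ξ hξ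
    rw [hval ξ hξ.2, Finset.prod_mul_distrib]
    congr 1
    have hnn : ∀ j i, 0 ≤ (1 - α i * β j) * (α i * β j) ^ ξ i j := fun j i =>
      mul_nonneg (by linarith [hαβ1 i j]) (pow_nonneg (hαβ0 i j).le _)
    have h1 : ∀ j : Fin n, ∏ i, ENNReal.ofReal ((1 - α i * β j) * (α i * β j) ^ ξ i j)
        = ENNReal.ofReal (∏ i, (1 - α i * β j) * (α i * β j) ^ ξ i j) := by
      intro j
      rw [← ENNReal.ofReal_prod_of_nonneg (fun i _ => hnn j i)]
    simp_rw [h1]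
    rw [← ENNReal.ofReal_prod_of_nonneg
      (fun j _ => Finset.prod_nonneg fun i _ => hnn j i)]
    congr 1
    calc ∏ j, ∏ i, (1 - α i * β j) * (α i * β j) ^ ξ i j
        = ∏ j, ∏ i, (1 - α i * β j) * (α i ^ ξ i j * β j ^ ξ i j) := by
          simp_rw [mul_pow]
      _ = (∏ j, ∏ i, (1 - α i * β j)) *
            ((∏ j, ∏ i, α i ^ ξ i j) * (∏ j, ∏ i, β j ^ ξ i j)) := by
          simp_rw [Finset.prod_mul_distrib]
      _ = (∏ j, ∏ i, (1 - α i * β j)) * ((∏ i, α i ^ r i) * ∏ j, β j ^ c j) := by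
          congr 1
          congr 1
          · rw [Finset.prod_comm]
            refine Finset.prod_congr rfl fun i _ => ?_
            rw [Finset.prod_pow_eq_pow_sum, hξ.1 i]
          · refine Finset.prod_congr rfl fun j _ => ?_
            rw [Finset.prod_pow_eq_pow_sum, hξ.2 j]
  set K : ℝ≥0∞ := ν {ξ0} with hK
  have hconst' : ∀ ξ ∈ S, ν {ξ} = K := by
    intro ξ hξ; rw [hconst ξ hξ, hK, hconst ξ0 hξ0]
  -- K is positive and finite
  have hK0 : K ≠ 0 := by
    rw [hK, hval ξ0 hξ0.2]
    rw [Finset.prod_ne_zero_iff]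
    intro j _
    refine mul_ne_zero (ENNReal.inv_ne_zero.mpr (hZnetop j)) ?_
    rw [Finset.prod_ne_zero_iff]
    intro i _
    exact (ENNReal.ofReal_pos.mpr (mul_pos (by linarith [hαβ1 i j])
      (pow_pos (hαβ0 i j) _))).ne'
  have hKtop : K ≠ ∞ := by
    rw [hK, hval ξ0 hξ0.2]
    refine ENNReal.prod_ne_top fun j _ => ?_
    exact ENNReal.mul_ne_top (ENNReal.inv_ne_top.mpr (hZne0 j))
      (ENNReal.prod_ne_top fun i _ => ENNReal.ofReal_ne_top)
  -- ν vanishes off tables with the right column sums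
  have hzero : ∀ ξ : Fin m → Fin n → ℕ, (∃ j, ∑ i, ξ i j ≠ c j) → ν {ξ} = 0 := by
    intro ξ ⟨j, hj⟩
    rw [hν, Finset.prod_eq_zero (Finset.mem_univ j)]
    rw [cond_apply (hmeas' _) (μcol j)]
    have : {v : Fin m → ℕ | ∑ i, v i = c j} ∩ {fun i => ξ i j} = ∅ := by
      ext v
      simp only [Set.mem_inter_iff, Set.mem_setOf_eq, Set.mem_singleton_iff,
        Set.mem_empty_iff_false, iff_false, not_and]
      rintro hv rfl
      exact hj hv
    rw [this, measure_empty, mul_zero]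
  -- compute ν E
  have hSfin : S.Finite := contingencyTables_finite m n r c
  have hESdiff : ν (E \ S) = 0 := by
    have hcnt : (E \ S).Countable := (E \ S).to_countable
    have : E \ S = ⋃ ξ ∈ E \ S, {ξ} := (Set.biUnion_of_singleton _).symm
    rw [this, measure_biUnion_null_iff hcnt]
    intro ξ hξ
    refine hzero ξ ?_
    by_contra h
    push_neg at h
    exact hξ.2 ⟨hξ.1, h⟩
  have hSsubE : S ⊆ E := fun ξ hξ => hξ.1
  have hνE : ν E = (S.ncard : ℝ≥0∞) * K := by
    have h1 : ν E = ν S := by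
      have := measure_diff_null (μ := ν) (s := E) hESdiff
      rw [← this]
      congr 1
      rw [Set.diff_diff_right_self, Set.inter_eq_self_of_subset_right hSsubE]
    rw [h1]
    have h2 : (hSfin.toFinset : Set (Fin m → Fin n → ℕ)) = S := hSfin.coe_toFinset
    have h3 : ν S = ∑ ξ ∈ hSfin.toFinset, ν {ξ} := by
      rw [← measure_biUnion_finset (fun x _ y _ hxy => Set.disjoint_singleton.mpr hxy)
        (fun _ _ => hmeas _)]
      congr 1
      ext y
      simp [hSfin.mem_toFinset]
    rw [h3, Finset.sum_congr rfl (fun ξ hξ => hconst' ξ (hSfin.mem_toFinset.mp hξ)),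
      Finset.sum_const, Set.ncard_eq_toFinset_card _ hSfin, nsmul_eq_mul]
  have hNne0 : (S.ncard : ℝ≥0∞) ≠ 0 := by
    simp only [ne_eq, Nat.cast_eq_zero]
    exact ((Set.ncard_pos hSfin).mpr ⟨ξ0, hξ0⟩).ne'
  -- final computation
  rw [cond_apply (hmeas _) ν]
  have hEξ0 : E ∩ {ξ0} = {ξ0} :=
    Set.inter_eq_self_of_subset_right (Set.singleton_subset_iff.mpr (hSsubE hξ0))
  rw [hEξ0, hconst' ξ0 hξ0, hνE, ENNReal.mul_inv (Or.inl hNne0) (Or.inl (natCast_ne_top _)),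
    mul_assoc, ENNReal.inv_mul_cancel hK0 hKtop, mul_one]
end

section
/- Let r ∈ ℝ_{≥0}^m and c ∈ ℝ_{≥0}^n with Σ_i r_i = Σ_j c_j, and let X = (X_{ij}) be an m×n array of independent exponential random variables where X_{ij} has rate λ_{ij} = −log(α_i β_j), with 0 < α_i β_j < 1 for all i,j. Then the joint density of X at any real-valued (r,c)-contingency table ξ equals (∏_i α_i^{r_i}) (∏_j β_j^{c_j}) ∏_{i,j} λ_{ij}; in particular the joint density of X is constant on the set of real-valued (r,c)-contingency tables. -/
open MeasureTheory Real

/-- for an array of independent exponential random variables `X i j` with rates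
`λ i j = -log (α i * β j)`, the joint density `∏ i j, λ i j * exp (-(λ i j) * ξ i j)`
at any real-valued `(r,c)`-contingency table `ξ` equals
`(∏ i, α i ^ r i) * (∏ j, β j ^ c j) * ∏ i j, λ i j`; in particular it is constant on the
set of real-valued `(r,c)`-contingency tables. -/
theorem stmt_4 (m n : ℕ) (r : Fin m → ℝ) (c : Fin n → ℝ)
    (hr : ∀ i, 0 ≤ r i) (hc : ∀ j, 0 ≤ c j) (hrc : ∑ i, r i = ∑ j, c j)
    (α : Fin m → ℝ) (β : Fin n → ℝ) (hα : ∀ i, 0 < α i) (hβ : ∀ j, 0 < β j)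
    (hαβ1 : ∀ i j, α i * β j < 1)
    (lam : Fin m → Fin n → ℝ) (hlam : ∀ i j, lam i j = -Real.log (α i * β j))
    (ξ : Fin m → Fin n → ℝ) (hξ0 : ∀ i j, 0 ≤ ξ i j)
    (hξr : ∀ i, ∑ j, ξ i j = r i) (hξc : ∀ j, ∑ i, ξ i j = c j) :
    ∏ i, ∏ j, lam i j * Real.exp (-(lam i j) * ξ i j)
      = (∏ i, α i ^ r i) * (∏ j, β j ^ c j) * ∏ i, ∏ j, lam i j := by
  have h1 : ∀ i j, -(lam i j) * ξ i j
      = Real.log (α i) * ξ i j + Real.log (β j) * ξ i j := by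
    intro i j
    rw [hlam, Real.log_mul (hα i).ne' (hβ j).ne']
    ring
  have hE : ∏ i, ∏ j, Real.exp (-(lam i j) * ξ i j)
      = (∏ i, α i ^ r i) * (∏ j, β j ^ c j) := by
    simp only [h1, ← Real.exp_sum]
    have hA : ∏ i, α i ^ r i = Real.exp (∑ i, Real.log (α i) * r i) := by
      rw [Real.exp_sum]
      exact Finset.prod_congr rfl fun i _ => Real.rpow_def_of_pos (hα i) _
    have hB : ∏ j, β j ^ c j = Real.exp (∑ j, Real.log (β j) * c j) := by
      rw [Real.exp_sum]
      exact Finset.prod_congr rfl fun j _ => Real.rpow_def_of_pos (hβ j) _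
    rw [hA, hB, ← Real.exp_add]
    congr 1
    simp only [Finset.sum_add_distrib]
    congr 1
    · simp only [← Finset.mul_sum, hξr]
    · rw [Finset.sum_comm]
      simp only [← Finset.mul_sum, hξc]
  calc ∏ i, ∏ j, lam i j * Real.exp (-(lam i j) * ξ i j)
      = (∏ i, ∏ j, lam i j) * ∏ i, ∏ j, Real.exp (-(lam i j) * ξ i j) := by
        simp [Finset.prod_mul_distrib]
    _ = (∏ i, α i ^ r i) * (∏ j, β j ^ c j) * ∏ i, ∏ j, lam i j := by
        rw [hE]; ring
end

section
/- (Probabilistic divide-and-conquer) Let μ and ν be probability measures on measurable spaces 𝒳 and 𝒴, and let E ⊆ 𝒳 × 𝒴 be measurable with (μ × ν)(E) > 0. For a ∈ 𝒳 write E_a = {b ∈ 𝒴 : (a,b) ∈ E}. Let μ' be the 𝒳-marginal of the conditional measure (μ × ν)(· | E), and for μ'-almost every a let ν_a be the measure ν conditioned on E_a (which is well-defined since ν(E_a) > 0 for μ'-almost every a). Then the probability measure on 𝒳 × 𝒴 given by S ↦ ∫ ν_a({b : (a,b) ∈ S}) dμ'(a) equals the conditional measure (μ × ν)(· | E). -/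
open MeasureTheory ProbabilityTheory

/-- Probabilistic divide-and-conquer: let `μ`, `ν` be probability measures on
`𝒳`, `𝒴`, and `E ⊆ 𝒳 × 𝒴` measurable with `(μ.prod ν) E > 0`.  Let `μ'` be the
`𝒳`-marginal of the conditional measure `(μ.prod ν)[|E]`, and for `a : 𝒳` let `ν_a` be `ν`
conditioned on the section `E_a = {b | (a, b) ∈ E}`.  Then for every measurable
`S ⊆ 𝒳 × 𝒴`, `∫⁻ a, ν_a {b | (a,b) ∈ S} ∂μ' = (μ.prod ν)[|E] S`, i.e. the two-stage PDC
measure coincides with the conditional measure. -/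
theorem stmt_7 {𝒳 𝒴 : Type*} [MeasurableSpace 𝒳] [MeasurableSpace 𝒴]
    (μ : Measure 𝒳) (ν : Measure 𝒴)
    [IsProbabilityMeasure μ] [IsProbabilityMeasure ν]
    (E : Set (𝒳 × 𝒴)) (hE : MeasurableSet E) (hEpos : 0 < (μ.prod ν) E) :
    ∀ S : Set (𝒳 × 𝒴), MeasurableSet S →
      ∫⁻ a, (ν[|{b | (a, b) ∈ E}]) {b | (a, b) ∈ S} ∂(((μ.prod ν)[|E]).map Prod.fst)
        = ((μ.prod ν)[|E]) S := by
  intro S hS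
  have hmE : ∀ a : 𝒳, MeasurableSet {b | (a, b) ∈ E} := fun a => measurable_prodMk_left hE
  have heq : ∀ a : 𝒳, (ν[|{b | (a, b) ∈ E}]) {b | (a, b) ∈ S}
      = (ν {b | (a, b) ∈ E})⁻¹ * ν {b | (a, b) ∈ S ∩ E} := by
    intro a
    rw [cond_apply (hmE a)]
    have : {b | (a, b) ∈ E} ∩ {b | (a, b) ∈ S} = {b | (a, b) ∈ S ∩ E} := by
      ext b; simp [and_comm]
    rw [this]
  have h1 : Measurable fun a => ν {b | (a, b) ∈ E} := measurable_measure_prodMk_left hE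
  have h2 : Measurable fun a => ν {b | (a, b) ∈ S ∩ E} :=
    measurable_measure_prodMk_left (hS.inter hE)
  have hf : Measurable fun a => (ν[|{b | (a, b) ∈ E}]) {b | (a, b) ∈ S} := by
    simp only [heq]; exact h1.inv.mul h2
  rw [lintegral_map hf measurable_fst]
  rw [ProbabilityTheory.cond, lintegral_smul_measure, Measure.smul_apply, smul_eq_mul,
    Measure.restrict_apply hS]
  have key : ∫⁻ p, (ν[|{b | (p.1, b) ∈ E}]) {b | (p.1, b) ∈ S} ∂((μ.prod ν).restrict E)
      = (μ.prod ν) (S ∩ E) := by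
    have hfm : Measurable (E.indicator fun p : 𝒳 × 𝒴 =>
        (ν[|{b | (p.1, b) ∈ E}]) {b | (p.1, b) ∈ S}) :=
      Measurable.indicator (hf.comp measurable_fst) hE
    rw [← lintegral_indicator hE, lintegral_prod _ hfm.aemeasurable]
    rw [Measure.prod_apply (hS.inter hE)]
    refine lintegral_congr fun a => ?_
    have : ∀ b : 𝒴, E.indicator (fun p => (ν[|{b | (p.1, b) ∈ E}]) {b | (p.1, b) ∈ S}) (a, b)
        = {b | (a, b) ∈ E}.indicator (fun _ => (ν[|{b | (a, b) ∈ E}]) {b | (a, b) ∈ S}) b := by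
      intro b
      by_cases hb : (a, b) ∈ E <;> simp [Set.indicator, hb]
    simp only [this]
    rw [lintegral_indicator (hmE a), setLIntegral_const, heq a]
    rcases eq_or_ne (ν {b | (a, b) ∈ E}) 0 with h0 | h0
    · have : ν {b | (a, b) ∈ S ∩ E} = 0 := by
        refine measure_mono_null ?_ h0
        intro b hb; exact hb.2
      simp only [this, mul_zero, zero_mul, h0]
      exact (measure_mono_null Set.inter_subset_right h0).symm
    · rw [mul_assoc, mul_comm (ν {b | (a, b) ∈ S ∩ E}),
        ← mul_assoc, ENNReal.inv_mul_cancel h0 (measure_ne_top ν _), one_mul]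
      rfl
  rw [key, smul_eq_mul]
end

section
/- Let r ∈ ℕ^2 and c ∈ ℕ^n with r_1 + r_2 = Σ_j c_j. Let x_{1,1},…,x_{1,n−1} be independent, with x_{1,j} uniform on {0,1,…,c_j}, and define x_{2,j} = c_j − x_{1,j} for j < n, x_{1,n} = r_1 − Σ_{j<n} x_{1,j}, and x_{2,n} = r_2 − Σ_{j<n} x_{2,j}. Then for every 2×n (r,c)-contingency table ξ, P(x = ξ) = 1/∏_{j=1}^{n−1}(c_j + 1). In particular, conditioned on the event {x_{1,n} ≥ 0 and x_{2,n} ≥ 0}, the matrix x is uniformly distributed over the set of 2×n (r,c)-contingency tables. -/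
open MeasureTheory ProbabilityTheory ENNReal

/-- Given the top-row entries `v j` of the first `n` columns, the full `2 × (n+1)` matrix
produced by the sampler: `x 0 j = v j` and `x 1 j = c j - v j` for `j < n`, while the last
column is `x 0 n = r 0 - ∑ v j` and `x 1 n = r 1 - ∑ (c j - v j)` (entries in `ℤ` since the
last column may be negative). -/
def tableOfTopRow (n : ℕ) (r : Fin 2 → ℕ) (c : Fin (n + 1) → ℕ) (v : Fin n → ℕ) :
    Fin 2 → Fin (n + 1) → ℤ := fun i j =>
  if h : (j : ℕ) < n then
    (if i = 0 then (v ⟨j, h⟩ : ℤ) else (c j : ℤ) - (v ⟨j, h⟩ : ℤ))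
  else
    (if i = 0 then (r 0 : ℤ) - ∑ j', (v j' : ℤ)
     else (r 1 : ℤ) - ∑ j', ((c j'.castSucc : ℤ) - (v j' : ℤ)))

/-- The set of `2 × (n+1)` `(r,c)`-contingency tables, viewed inside integer matrices. -/
def intTables (n : ℕ) (r : Fin 2 → ℕ) (c : Fin (n + 1) → ℕ) :
    Set (Fin 2 → Fin (n + 1) → ℤ) :=
  {ξ | (∀ i j, 0 ≤ ξ i j) ∧ (∀ i, ∑ j, ξ i j = (r i : ℤ)) ∧ (∀ j, ∑ i, ξ i j = (c j : ℤ))}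

variable {n : ℕ} {r : Fin 2 → ℕ} {c : Fin (n + 1) → ℕ}

lemma tor_zero_lt (v : Fin n → ℕ) (j : Fin n) :
    tableOfTopRow n r c v 0 j.castSucc = (v j : ℤ) := by
  simp [tableOfTopRow, j.isLt]

lemma tor_one_lt (v : Fin n → ℕ) (j : Fin n) :
    tableOfTopRow n r c v 1 j.castSucc = (c j.castSucc : ℤ) - (v j : ℤ) := by
  simp [tableOfTopRow, j.isLt]

lemma tor_zero_last (v : Fin n → ℕ) :
    tableOfTopRow n r c v 0 (Fin.last n) = (r 0 : ℤ) - ∑ j', (v j' : ℤ) := by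
  simp [tableOfTopRow]

lemma tor_one_last (v : Fin n → ℕ) :
    tableOfTopRow n r c v 1 (Fin.last n)
      = (r 1 : ℤ) - ∑ j', ((c j'.castSucc : ℤ) - (v j' : ℤ)) := by
  simp [tableOfTopRow]

lemma tor_eq_of (v : Fin n → ℕ) {ξ : Fin 2 → Fin (n + 1) → ℤ} (hξ : ξ ∈ intTables n r c)
    (hv : ∀ j : Fin n, (v j : ℤ) = ξ 0 j.castSucc) : tableOfTopRow n r c v = ξ := by
  obtain ⟨hnn, hrow, hcol⟩ := hξ
  have h1 : ∀ j : Fin n, ξ 1 j.castSucc = (c j.castSucc : ℤ) - ξ 0 j.castSucc := by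
    intro j
    have := hcol j.castSucc
    rw [Fin.sum_univ_two] at this
    omega
  have hs0 : ∑ j', (v j' : ℤ) = ∑ j' : Fin n, ξ 0 j'.castSucc :=
    Finset.sum_congr rfl fun j _ => hv j
  have hs1 : ∑ j', ((c j'.castSucc : ℤ) - (v j' : ℤ)) = ∑ j' : Fin n, ξ 1 j'.castSucc :=
    Finset.sum_congr rfl fun j _ => by rw [hv j, h1 j]
  have h0r := hrow 0
  have h1r := hrow 1
  rw [Fin.sum_univ_castSucc] at h0r h1r
  funext i j
  refine Fin.lastCases ?_ ?_ j
  · rcases (by omega : i = 0 ∨ i = 1) with rfl | rfl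
    · rw [tor_zero_last, hs0]; linarith
    · rw [tor_one_last, hs1]; linarith
  · intro j'
    rcases (by omega : i = 0 ∨ i = 1) with rfl | rfl
    · rw [tor_zero_lt, hv]
    · rw [tor_one_lt, h1 j', hv]

lemma tor_mem_iff (hrc : r 0 + r 1 = ∑ j, c j) (v : Fin n → ℕ) :
    tableOfTopRow n r c v ∈ intTables n r c ↔
      (∀ j, v j ≤ c j.castSucc) ∧ (∑ j, (v j : ℤ)) ≤ (r 0 : ℤ) ∧
        (∑ j, ((c j.castSucc : ℤ) - (v j : ℤ))) ≤ (r 1 : ℤ) := by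
  have hclast : (c (Fin.last n) : ℤ) = (r 0 : ℤ) + r 1 - ∑ j : Fin n, (c j.castSucc : ℤ) := by
    have h := congrArg (Nat.cast (R := ℤ)) hrc
    push_cast [Fin.sum_univ_castSucc] at h
    linarith
  constructor
  · rintro ⟨hnn, hrow, hcol⟩
    refine ⟨fun j => ?_, ?_, ?_⟩
    · have := hnn 1 j.castSucc
      rw [tor_one_lt] at this
      omega
    · have := hnn 0 (Fin.last n)
      rw [tor_zero_last] at this
      linarith
    · have := hnn 1 (Fin.last n)
      rw [tor_one_last] at this
      linarith
  · rintro ⟨hle, h0, h1⟩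
    refine ⟨fun i j => ?_, fun i => ?_, fun j => ?_⟩
    · refine Fin.lastCases ?_ ?_ j
      · rcases (by omega : i = 0 ∨ i = 1) with rfl | rfl
        · rw [tor_zero_last]; linarith
        · rw [tor_one_last]; linarith
      · intro j'
        rcases (by omega : i = 0 ∨ i = 1) with rfl | rfl
        · rw [tor_zero_lt]; positivity
        · rw [tor_one_lt]
          have := hle j'
          omega
    · rw [Fin.sum_univ_castSucc]
      rcases (by omega : i = 0 ∨ i = 1) with rfl | rfl
      · simp only [tor_zero_lt, tor_zero_last]; ring
      · simp only [tor_one_lt, tor_one_last]; ring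
    · rw [Fin.sum_univ_two]
      refine Fin.lastCases ?_ ?_ j
      · rw [tor_zero_last, tor_one_last, Finset.sum_sub_distrib, hclast]; ring
      · intro j'
        rw [tor_zero_lt, tor_one_lt]; ring

lemma tor_injective : Function.Injective (tableOfTopRow n r c) := by
  intro v w h
  funext j
  have : tableOfTopRow n r c v 0 j.castSucc = tableOfTopRow n r c w 0 j.castSucc := by rw [h]
  rw [tor_zero_lt, tor_zero_lt] at this
  exact_mod_cast this

lemma tor_preimage_singleton {ξ : Fin 2 → Fin (n + 1) → ℤ} (hξ : ξ ∈ intTables n r c) :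
    tableOfTopRow n r c ⁻¹' {ξ} = {fun j => (ξ 0 j.castSucc).toNat} := by
  ext v
  simp only [Set.mem_preimage, Set.mem_singleton_iff]
  constructor
  · rintro rfl
    funext j
    rw [tor_zero_lt (r := r) (c := c) v j, Int.toNat_natCast]
  · rintro rfl
    exact tor_eq_of _ hξ fun j => Int.toNat_of_nonneg (hξ.1 0 j.castSucc)

lemma tor_image : tableOfTopRow n r c '' {v | tableOfTopRow n r c v ∈ intTables n r c}
    = intTables n r c := by
  ext ξ
  constructor
  · rintro ⟨v, hv, rfl⟩; exact hv
  · intro hξ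
    have heq := tor_eq_of (r := r) (c := c) (fun j => (ξ 0 j.castSucc).toNat) hξ
      fun j => Int.toNat_of_nonneg (hξ.1 0 j.castSucc)
    exact ⟨fun j => (ξ 0 j.castSucc).toNat, by rw [Set.mem_setOf_eq, heq]; exact hξ, heq⟩

/-- sample the first `n` top-row entries independently, `v j` uniform on
`{0, …, c j}`, and complete the `2 × (n+1)` table deterministically.  Then every
`(r,c)`-contingency table `ξ` is produced with probability `∏ j (c j + 1)⁻¹`; in particular,
conditioned on the last column being nonnegative, the resulting table is uniformly
distributed over the set of `2 × (n+1)` `(r,c)`-contingency tables. -/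
theorem stmt_9 (n : ℕ) (r : Fin 2 → ℕ) (c : Fin (n + 1) → ℕ)
    (hrc : r 0 + r 1 = ∑ j, c j)
    (μ : Measure (Fin n → ℕ)) [IsProbabilityMeasure μ]
    (hμ : ∀ v : Fin n → ℕ,
      μ {v} = if ∀ j, v j ≤ c j.castSucc
        then ∏ j : Fin n, ((c j.castSucc : ℝ≥0∞) + 1)⁻¹ else 0) :
    (∀ ξ ∈ intTables n r c,
      (μ.map (tableOfTopRow n r c)) {ξ} = ∏ j : Fin n, ((c j.castSucc : ℝ≥0∞) + 1)⁻¹) ∧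
    (∀ ξ ∈ intTables n r c,
      (μ.map (tableOfTopRow n r c))[|{A : Fin 2 → Fin (n + 1) → ℤ |
          0 ≤ A 0 (Fin.last n) ∧ 0 ≤ A 1 (Fin.last n)}] {ξ}
        = ((intTables n r c).ncard : ℝ≥0∞)⁻¹) := by
  set p : ℝ≥0∞ := ∏ j : Fin n, ((c j.castSucc : ℝ≥0∞) + 1)⁻¹ with hp
  have hmf : Measurable (tableOfTopRow n r c) := measurable_of_countable _
  have hmS : ∀ s : Set (Fin 2 → Fin (n + 1) → ℤ), MeasurableSet s :=
    fun s => s.to_countable.measurableSet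
  have hmD : ∀ s : Set (Fin n → ℕ), MeasurableSet s :=
    fun s => s.to_countable.measurableSet
  -- Part A
  have hA : ∀ ξ ∈ intTables n r c, (μ.map (tableOfTopRow n r c)) {ξ} = p := by
    intro ξ hξ
    rw [Measure.map_apply hmf (hmS _), tor_preimage_singleton hξ, hμ, if_pos]
    intro j
    have h1 := hξ.2.2 j.castSucc
    rw [Fin.sum_univ_two] at h1
    have h2 := hξ.1 1 j.castSucc
    omega
  refine ⟨hA, ?_⟩
  intro ξ hξ
  set E : Set (Fin 2 → Fin (n + 1) → ℤ) :=
    {A | 0 ≤ A 0 (Fin.last n) ∧ 0 ≤ A 1 (Fin.last n)} with hE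
  set G : Set (Fin n → ℕ) := {v | tableOfTopRow n r c v ∈ intTables n r c} with hG
  have hGfin : G.Finite := by
    refine Set.Finite.subset (Set.Finite.pi fun j => Set.finite_Iic (c j.castSucc)) ?_
    intro v hv
    rw [Set.mem_pi]
    exact fun j _ => ((tor_mem_iff hrc v).1 hv).1 j
  -- p properties
  have hp0 : p ≠ 0 := by
    rw [hp]
    refine Finset.prod_ne_zero_iff.2 fun j _ => ?_
    simp [ENNReal.inv_ne_zero]
  have hptop : p ≠ ⊤ := by
    rw [hp]
    refine (ENNReal.prod_lt_top fun j _ => ?_).ne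
    simp [ENNReal.inv_lt_top, pos_iff_ne_zero]
  -- the measure of E
  have hνE : (μ.map (tableOfTopRow n r c)) E = (G.ncard : ℝ≥0∞) * p := by
    rw [Measure.map_apply hmf (hmS _)]
    have hsub : G ⊆ tableOfTopRow n r c ⁻¹' E := by
      intro v hv
      exact ⟨hv.1 0 (Fin.last n), hv.1 1 (Fin.last n)⟩
    have hdiff : μ (tableOfTopRow n r c ⁻¹' E \ G) = 0 := by
      have : ∀ v ∈ tableOfTopRow n r c ⁻¹' E \ G, μ {v} = 0 := by
        rintro v ⟨hvE, hvG⟩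
        rw [hμ, if_neg]
        intro hle
        refine hvG ((tor_mem_iff hrc v).2 ⟨hle, ?_, ?_⟩)
        · have := hvE.1; rw [tor_zero_last] at this; linarith
        · have := hvE.2; rw [tor_one_last] at this; linarith
      have h := (measure_preimage_eq_zero_iff_of_countable (μ := μ) (f := id)
        (s := tableOfTopRow n r c ⁻¹' E \ G) (Set.to_countable _)).2
      rw [Set.preimage_id] at h
      exact h (by simpa using this)
    have h1 : μ (tableOfTopRow n r c ⁻¹' E) = μ G := by
      refine le_antisymm ?_ (measure_mono hsub)
      calc μ (tableOfTopRow n r c ⁻¹' E)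
          = μ (G ∪ (tableOfTopRow n r c ⁻¹' E \ G)) := by rw [Set.union_diff_cancel hsub]
        _ ≤ μ G + μ (tableOfTopRow n r c ⁻¹' E \ G) := measure_union_le _ _
        _ = μ G := by rw [hdiff, add_zero]
    rw [h1]
    -- now μ G = ncard G * p
    have h2 : μ G = ∑ v ∈ hGfin.toFinset, μ {v} := by
      have := sum_measure_preimage_singleton (μ := μ) hGfin.toFinset (f := id)
        (fun y _ => hmD _)
      simp only [Set.preimage_id] at this
      simp only [hGfin.coe_toFinset] at this
      exact this.symm
    rw [h2]
    have h3 : ∀ v ∈ hGfin.toFinset, μ {v} = p := by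
      intro v hv
      rw [Set.Finite.mem_toFinset] at hv
      rw [hμ, if_pos fun j => ((tor_mem_iff hrc v).1 hv).1 j]
    rw [Finset.sum_congr rfl h3, Finset.sum_const, nsmul_eq_mul]
    congr 1
    exact_mod_cast congrArg (Nat.cast (R := ℝ≥0∞)) (Set.ncard_eq_toFinset_card G hGfin).symm
  -- cardinality
  have hcard : (intTables n r c).ncard = G.ncard := by
    rw [← tor_image (r := r) (c := c)]
    exact Set.ncard_image_of_injective _ tor_injective
  have hN0 : (G.ncard : ℝ≥0∞) ≠ 0 := by
    have : G.Nonempty := by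
      obtain ⟨v, hv, -⟩ := (Set.mem_image _ _ _).1 (tor_image (r := r) (c := c) ▸ hξ)
      exact ⟨v, hv⟩
    simp only [ne_eq, Nat.cast_eq_zero]
    exact (Set.ncard_pos hGfin).2 this |>.ne'
  -- conclude
  rw [cond_apply (hmS E), hνE]
  have hEξ : E ∩ {ξ} = {ξ} := by
    refine Set.inter_eq_self_of_subset_right ?_
    rw [Set.singleton_subset_iff]
    exact ⟨hξ.1 0 (Fin.last n), hξ.1 1 (Fin.last n)⟩
  rw [hEξ, hA ξ hξ, hcard]
  rw [ENNReal.mul_inv (Or.inl hN0) (Or.inl (ENNReal.natCast_ne_top _)), mul_assoc,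
    ENNReal.inv_mul_cancel hp0 hptop, mul_one]
end

section
/- Under the hypotheses of the central-limit corollary — S_n = Σ_{j=1}^{n−1} U_j^{(n)} with independent U_j^{(n)} uniform on {0,…,c_j^{(n)}}, (S_n − E S_n)/√Var(S_n) converging in distribution to standard normal, (r_1^{(n)} − c_n^{(n)} − E S_n)/√Var(S_n) → t ∈ ℝ — if additionally c_n^{(n)}/√Var(S_n) → λ with λ ∈ (0, ∞], then lim inf_n P(S_n ∈ [r_1^{(n)} − c_n^{(n)}, r_1^{(n)}]) > 0; in the case λ = ∞ the limit inferior is at least 1 − Φ(t). -/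
open MeasureTheory ProbabilityTheory Filter

/-- The standard normal cumulative distribution function
`Φ(x) = (1/√(2π)) ∫_{-∞}^x e^{-u²/2} du`. -/
noncomputable def stdNormalCDF (x : ℝ) : ℝ :=
  (Real.sqrt (2 * Real.pi))⁻¹ * ∫ u in Set.Iic x, Real.exp (-(u ^ 2) / 2)

lemma gauss_integrable : Integrable (fun u : ℝ => Real.exp (-(u ^ 2) / 2)) := by
  have h := integrable_exp_neg_mul_sq (by norm_num : (0:ℝ) < 1/2)
  have he : (fun u : ℝ => Real.exp (-(u ^ 2) / 2))
      = fun u : ℝ => Real.exp (-(1/2) * u ^ 2) := by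
    funext u; congr 1; ring
  rw [he]; exact h

lemma gauss_total : ∫ u : ℝ, Real.exp (-(u ^ 2) / 2) = Real.sqrt (2 * Real.pi) := by
  have he : (fun u : ℝ => Real.exp (-(u ^ 2) / 2))
      = fun u : ℝ => Real.exp (-(1/2) * u ^ 2) := by
    funext u; congr 1; ring
  rw [he, integral_gaussian]
  congr 1; rw [eq_comm, eq_div_iff (by norm_num : (1/2:ℝ) ≠ 0)]; ring

lemma sqrt2pi_pos : 0 < Real.sqrt (2 * Real.pi) :=
  Real.sqrt_pos.2 (by have := Real.pi_pos; linarith)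

lemma cdf_diff {a b : ℝ} (hab : a ≤ b) :
    stdNormalCDF b - stdNormalCDF a
      = (Real.sqrt (2 * Real.pi))⁻¹ * ∫ u in Set.Ioc a b, Real.exp (-(u ^ 2) / 2) := by
  unfold stdNormalCDF
  rw [← mul_sub]
  congr 1
  rw [← Set.Iic_union_Ioc_eq_Iic hab,
    setIntegral_union (Set.Iic_disjoint_Ioc le_rfl) measurableSet_Ioc
      gauss_integrable.integrableOn gauss_integrable.integrableOn]
  ring

lemma cdf_lt {a b : ℝ} (hab : a < b) : stdNormalCDF a < stdNormalCDF b := by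
  have h : 0 < ∫ u in Set.Ioc a b, Real.exp (-(u ^ 2) / 2) := by
    rw [← intervalIntegral.integral_of_le hab.le]
    exact intervalIntegral.intervalIntegral_pos_of_pos_on
      gauss_integrable.intervalIntegrable
      (fun x _ => Real.exp_pos _) hab
  have h2 := cdf_diff hab.le
  nlinarith [inv_pos.2 sqrt2pi_pos]

lemma cdf_nonneg (x : ℝ) : 0 ≤ stdNormalCDF x :=
  mul_nonneg (inv_nonneg.2 (Real.sqrt_nonneg _))
    (integral_nonneg fun u => (Real.exp_pos _).le)

lemma cdf_le_add {a b : ℝ} (hab : a ≤ b) :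
    stdNormalCDF b ≤ stdNormalCDF a + (Real.sqrt (2 * Real.pi))⁻¹ * (b - a) := by
  have h1 : ∫ u in Set.Ioc a b, Real.exp (-(u ^ 2) / 2) ≤ b - a := by
    have h2 : ∫ u in Set.Ioc a b, Real.exp (-(u ^ 2) / 2)
        ≤ ∫ _ in Set.Ioc a b, (1:ℝ) := by
      refine setIntegral_mono_on gauss_integrable.integrableOn
        (integrableOn_const (by simp [Real.volume_Ioc, ENNReal.ofReal_lt_top]))
        measurableSet_Ioc fun x _ => ?_
      rw [Real.exp_le_one_iff]
      nlinarith [sq_nonneg x]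
    have h3 : ∫ _ in Set.Ioc a b, (1:ℝ) = b - a := by
      simp [Real.volume_Ioc, ENNReal.toReal_ofReal (by linarith : (0:ℝ) ≤ b - a), hab]
    linarith
  have h2 := cdf_diff hab
  have := inv_pos.2 sqrt2pi_pos
  nlinarith

lemma cdf_tendsto_one : Tendsto (fun M : ℕ => stdNormalCDF M) atTop (nhds 1) := by
  have huniv : (⋃ M : ℕ, Set.Iic (M : ℝ)) = Set.univ := by
    ext x
    simpa using exists_nat_ge x
  have h := tendsto_setIntegral_of_monotone (μ := (volume : Measure ℝ))
    (f := fun u : ℝ => Real.exp (-(u ^ 2) / 2))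
    (s := fun M : ℕ => Set.Iic (M : ℝ))
    (fun _ => measurableSet_Iic)
    (fun i j hij => Set.Iic_subset_Iic.2 (by exact_mod_cast hij))
    (by rw [huniv]; exact gauss_integrable.integrableOn)
  rw [huniv] at h
  have h2 : ∫ u in (Set.univ : Set ℝ), Real.exp (-(u ^ 2) / 2) = Real.sqrt (2 * Real.pi) := by
    rw [setIntegral_univ, gauss_total]
  rw [h2] at h
  have h3 := h.const_mul (Real.sqrt (2 * Real.pi))⁻¹
  rw [inv_mul_cancel₀ sqrt2pi_pos.ne'] at h3
  exact h3

/-- under the hypotheses of the central-limit corollary, if additionally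
`cₙ n / s n → λ` with `λ ∈ (0, ∞]` (the limit taken in `ℝ≥0∞`), then
`liminf P(S n ∈ [r₁ n - cₙ n, r₁ n]) > 0`, and when `λ = ∞` this liminf is at least
`1 - Φ(t)`. -/
theorem stmt_14
    (Ω : Type*) [MeasurableSpace Ω] (P : Measure Ω) [IsProbabilityMeasure P]
    (c : ℕ → ℕ → ℕ) (U : ℕ → ℕ → Ω → ℕ)
    (hUmeas : ∀ n j, Measurable (U n j))
    (hindep : ∀ n, iIndepFun (U n) P)
    (hUlaw : ∀ n j k, P {ω | U n j ω = k}
      = if k ≤ c n j then ((c n j : ENNReal) + 1)⁻¹ else 0)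
    (S : ℕ → Ω → ℕ) (hS : ∀ n ω, S n ω = ∑ j ∈ Finset.range (n - 1), U n j ω)
    (mS sS : ℕ → ℝ)
    (hm : ∀ n, mS n = ∫ ω, (S n ω : ℝ) ∂P)
    (hs : ∀ n, sS n = Real.sqrt (variance (fun ω => (S n ω : ℝ)) P))
    (r₁ cLast : ℕ → ℝ) (hr₁ : ∀ n, 0 ≤ r₁ n) (hcLast : ∀ n, 0 ≤ cLast n)
    (hCLT : ∀ x : ℝ, Tendsto
      (fun n => (P {ω | ((S n ω : ℝ) - mS n) / sS n ≤ x}).toReal) atTop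
      (nhds (stdNormalCDF x)))
    (t : ℝ) (ht : Tendsto (fun n => (r₁ n - cLast n - mS n) / sS n) atTop (nhds t))
    (lam : ENNReal) (hlam0 : 0 < lam)
    (hlam : Tendsto (fun n => ENNReal.ofReal (cLast n / sS n)) atTop (nhds lam)) :
    0 < Filter.liminf
        (fun n => (P {ω | r₁ n - cLast n ≤ (S n ω : ℝ) ∧ (S n ω : ℝ) ≤ r₁ n}).toReal)
        atTop ∧
    (lam = ⊤ → 1 - stdNormalCDF t ≤ Filter.liminf
        (fun n => (P {ω | r₁ n - cLast n ≤ (S n ω : ℝ) ∧ (S n ω : ℝ) ≤ r₁ n}).toReal)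
        atTop) := by
  set f := fun n => (P {ω | r₁ n - cLast n ≤ (S n ω : ℝ) ∧ (S n ω : ℝ) ≤ r₁ n}).toReal with hf
  have hf1 : ∀ n, f n ≤ 1 := by
    intro n
    have h := prob_le_one (μ := P) (s := {ω | r₁ n - cLast n ≤ (S n ω : ℝ) ∧ (S n ω : ℝ) ≤ r₁ n})
    have h2 := ENNReal.toReal_mono ENNReal.one_ne_top h
    rw [ENNReal.toReal_one] at h2
    exact h2
  -- eventually sS n > 0
  have hΦneg : 0 < stdNormalCDF (-1) := by
    have := cdf_lt (show (-2:ℝ) < -1 by norm_num)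
    have := cdf_nonneg (-2)
    linarith
  have hsev : ∀ᶠ n in atTop, 0 < sS n := by
    have h := (hCLT (-1)).eventually (eventually_gt_nhds hΦneg)
    filter_upwards [h] with n hn
    have hsnn : 0 ≤ sS n := by rw [hs n]; exact Real.sqrt_nonneg _
    rcases hsnn.lt_or_eq with hpos | heq
    · exact hpos
    · exfalso
      have hempty : {ω | ((S n ω : ℝ) - mS n) / sS n ≤ (-1:ℝ)} = ∅ := by
        ext ω
        simp [← heq, div_zero]
      rw [hempty] at hn
      simp at hn
  -- key claim
  have key : ∀ a b : ℝ, t < a → a < b →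
      (∀ᶠ n in atTop, b ≤ (r₁ n - mS n) / sS n) →
      stdNormalCDF b - stdNormalCDF a ≤ Filter.liminf f atTop := by
    intro a b hta hab hb
    have ha : ∀ᶠ n in atTop, (r₁ n - cLast n - mS n) / sS n ≤ a :=
      (ht.eventually (eventually_lt_nhds hta)).mono fun n h => h.le
    have hev : ∀ᶠ n in atTop,
        (P {ω | ((S n ω : ℝ) - mS n) / sS n ≤ b}).toReal
          - (P {ω | ((S n ω : ℝ) - mS n) / sS n ≤ a}).toReal ≤ f n := by
      filter_upwards [ha, hb, hsev] with n hna hnb hns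
      have hsub : {ω | ((S n ω : ℝ) - mS n) / sS n ≤ b}
          ⊆ {ω | ((S n ω : ℝ) - mS n) / sS n ≤ a}
            ∪ {ω | r₁ n - cLast n ≤ (S n ω : ℝ) ∧ (S n ω : ℝ) ≤ r₁ n} := by
        intro ω hω
        simp only [Set.mem_setOf_eq] at hω
        by_cases hA : ((S n ω : ℝ) - mS n) / sS n ≤ a
        · exact Or.inl hA
        · push_neg at hA
          refine Or.inr ⟨?_, ?_⟩
          · have h1 : a * sS n < (S n ω : ℝ) - mS n := (lt_div_iff₀ hns).1 hA
            have h2 : r₁ n - cLast n - mS n ≤ a * sS n := (div_le_iff₀ hns).1 hna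
            linarith
          · have h1 : (S n ω : ℝ) - mS n ≤ b * sS n := (div_le_iff₀ hns).1 hω
            have h2 : b * sS n ≤ r₁ n - mS n := (le_div_iff₀ hns).1 hnb
            linarith
      have hms : P {ω | ((S n ω : ℝ) - mS n) / sS n ≤ b}
          ≤ P {ω | ((S n ω : ℝ) - mS n) / sS n ≤ a}
            + P {ω | r₁ n - cLast n ≤ (S n ω : ℝ) ∧ (S n ω : ℝ) ≤ r₁ n} :=
        le_trans (measure_mono hsub) (measure_union_le _ _)
      have hfin : P {ω | ((S n ω : ℝ) - mS n) / sS n ≤ a}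
            + P {ω | r₁ n - cLast n ≤ (S n ω : ℝ) ∧ (S n ω : ℝ) ≤ r₁ n} ≠ ⊤ :=
        ENNReal.add_ne_top.2 ⟨measure_ne_top _ _, measure_ne_top _ _⟩
      have h3 := ENNReal.toReal_mono hfin hms
      rw [ENNReal.toReal_add (measure_ne_top _ _) (measure_ne_top _ _)] at h3
      simp only [hf]
      linarith
    have htend : Tendsto (fun n =>
        (P {ω | ((S n ω : ℝ) - mS n) / sS n ≤ b}).toReal
          - (P {ω | ((S n ω : ℝ) - mS n) / sS n ≤ a}).toReal) atTop
        (nhds (stdNormalCDF b - stdNormalCDF a)) := (hCLT b).sub (hCLT a)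
    have hlim := Filter.liminf_le_liminf hev htend.isBoundedUnder_ge
      (Filter.isCoboundedUnder_ge_of_le atTop hf1)
    rwa [htend.liminf_eq] at hlim
  -- from lam bound to eventual lower bound on cLast/sS
  have hclaim : ∀ L : ℝ, 0 ≤ L → ENNReal.ofReal L < lam →
      ∀ᶠ n in atTop, L < cLast n / sS n := by
    intro L hL0 hLlam
    filter_upwards [hlam.eventually (eventually_gt_nhds hLlam)] with n hn
    exact (ENNReal.ofReal_lt_ofReal_iff_of_nonneg hL0).1 hn
  have hbn : ∀ L δ : ℝ, 0 ≤ L → ENNReal.ofReal L < lam → 0 < δ →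
      ∀ᶠ n in atTop, t - δ + L ≤ (r₁ n - mS n) / sS n := by
    intro L δ hL0 hLlam hδ
    have h1 := ht.eventually (eventually_gt_nhds (show t - δ < t by linarith))
    filter_upwards [h1, hclaim L hL0 hLlam, hsev] with n hn1 hn2 hns
    have heq : (r₁ n - mS n) / sS n
        = (r₁ n - cLast n - mS n) / sS n + cLast n / sS n := by
      rw [← add_div]; congr 1; ring
    rw [heq]; linarith
  obtain ⟨L, hL0, hLlam⟩ : ∃ L : ℝ, 0 < L ∧ ENNReal.ofReal L < lam := by
    rcases eq_or_ne lam ⊤ with h | h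
    · exact ⟨1, one_pos, by simp [h]⟩
    · have htpos : 0 < lam.toReal := ENNReal.toReal_pos hlam0.ne' h
      refine ⟨lam.toReal / 2, by linarith, ?_⟩
      calc ENNReal.ofReal (lam.toReal / 2)
          < ENNReal.ofReal lam.toReal :=
            (ENNReal.ofReal_lt_ofReal_iff htpos).2 (by linarith)
        _ = lam := ENNReal.ofReal_toReal h
  have h1 : 0 < Filter.liminf f atTop := by
    have hk := key (t + L/4) (t - L/4 + L) (by linarith) (by linarith)
      (hbn L (L/4) hL0.le hLlam (by linarith))
    have := cdf_lt (show t + L/4 < t - L/4 + L by linarith)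
    linarith
  refine ⟨h1, fun hlamtop => ?_⟩
  have hstep : ∀ ε : ℝ, 0 < ε → 1 - stdNormalCDF (t + ε) ≤ Filter.liminf f atTop := by
    intro ε hε
    have hM : ∀ᶠ M : ℕ in atTop,
        stdNormalCDF M - stdNormalCDF (t + ε) ≤ Filter.liminf f atTop := by
      filter_upwards [tendsto_natCast_atTop_atTop.eventually_ge_atTop (t + ε + 1)] with M hMc
      have hb := hbn ((M : ℝ) - t + 1) 1 (by linarith)
        (by rw [hlamtop]; exact ENNReal.ofReal_lt_top) one_pos
      refine key (t + ε) (M : ℝ) (by linarith) (by linarith) ?_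
      filter_upwards [hb] with n hn
      linarith
    have htendM : Tendsto (fun M : ℕ => stdNormalCDF M - stdNormalCDF (t + ε)) atTop
        (nhds (1 - stdNormalCDF (t + ε))) := cdf_tendsto_one.sub tendsto_const_nhds
    exact le_of_tendsto htendM hM
  have hc0 : 0 < (Real.sqrt (2 * Real.pi))⁻¹ := inv_pos.2 sqrt2pi_pos
  refine le_of_forall_sub_le fun δ hδ => ?_
  set c0 := (Real.sqrt (2 * Real.pi))⁻¹ with hc0def
  have hεpos : 0 < δ / c0 := div_pos hδ hc0
  have h2 := hstep (δ / c0) hεpos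
  have h3 := cdf_le_add (show t ≤ t + δ / c0 by linarith)
  have h4 : c0 * (t + δ / c0 - t) = δ := by
    field_simp
    ring
  rw [← hc0def] at h3
  linarith
end
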